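/- Every element of B commutes with every element of J_F B J_F, and moreover J_F B J_F equals the commutant of B in End_ℂ(H_F); in particular the commutant of B is isomorphic as a ℂ-algebra to M₄(ℂ) ⊕ M₄(ℂ) ⊕ ℂ ⊕ M₃(ℂ). -/

import Mathlib

open Matrix ComplexConjugate

noncomputable section

/-- The internal Hilbert space of the Standard Model (one generation):
8×4 complex matrices. -/
abbrev HF : Type := Matrix (Fin 8) (Fin 4) ℂ

abbrev M8 : Type := Matrix (Fin 8) (Fin 8) ℂ
abbrev M4 : Type := Matrix (Fin 4) (Fin 4) ℂ
abbrev M3 : Type := Matrix (Fin 3) (Fin 3) ℂ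
abbrev M2 : Type := Matrix (Fin 2) (Fin 2) ℂ

/-- A 2×2 complex matrix is of quaternionic form. -/
def IsQuat (q : M2) : Prop :=
  ∃ α β : ℂ, q 0 0 = α ∧ q 0 1 = β ∧ q 1 0 = -conj β ∧ q 1 1 = conj α

/-- The block-diagonal matrix with diagonal blocks λ, conj λ, q, λ, m
(of sizes 1,1,2,1,3). -/
def Pmat (l : ℂ) (q : M2) (m : M3) : M8 :=
  Matrix.of fun i j =>
    if i = 0 ∧ j = 0 then l
    else if i = 1 ∧ j = 1 then conj l
    else if h : 2 ≤ (i : ℕ) ∧ (i : ℕ) < 4 ∧ 2 ≤ (j : ℕ) ∧ (j : ℕ) < 4 then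
      q ⟨(i : ℕ) - 2, by omega⟩ ⟨(j : ℕ) - 2, by omega⟩
    else if i = 4 ∧ j = 4 then l
    else if h : 5 ≤ (i : ℕ) ∧ 5 ≤ (j : ℕ) then
      m ⟨(i : ℕ) - 5, by have := i.isLt; omega⟩ ⟨(j : ℕ) - 5, by have := j.isLt; omega⟩
    else 0

/-- The operator ξ ↦ A ξ B on H_F. -/
def lrOp (A : M8) (B : M4) : Module.End ℂ HF where
  toFun ξ := A * ξ * B
  map_add' x y := by simp [Matrix.mul_add, Matrix.add_mul]
  map_smul' c x := by simp [Matrix.mul_smul, Matrix.smul_mul]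

/-- Left multiplication by an 8×8 matrix as an operator on H_F. -/
def lmul (A : M8) : Module.End ℂ HF where
  toFun ξ := A * ξ
  map_add' x y := Matrix.mul_add A x y
  map_smul' c x := by simp [Matrix.mul_smul]

/-- The representation π_F of A_F = ℂ ⊕ ℍ ⊕ M₃(ℂ) on H_F. -/
def piF (l : ℂ) (q : M2) (m : M3) : Module.End ℂ HF := lmul (Pmat l q m)

/-- The image π_F(A_F) as a set of operators. -/
def piFSet : Set (Module.End ℂ HF) := { T | ∃ l q m, IsQuat q ∧ T = piF l q m }

/-- The real structure J_F: ξ = [v₁; v₂] ↦ [v₂*; v₁*]. -/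
def JF (ξ : HF) : HF :=
  Matrix.of fun i j =>
    if h : (i : ℕ) < 4 then
      conj (ξ ⟨(j : ℕ) + 4, by have := j.isLt; omega⟩ ⟨(i : ℕ), h⟩)
    else
      conj (ξ ⟨(j : ℕ), by have := j.isLt; omega⟩ ⟨(i : ℕ) - 4, by have := i.isLt; omega⟩)

lemma JF_add (x y : HF) : JF (x + y) = JF x + JF y := by
  funext i j
  by_cases h : (i : ℕ) < 4 <;> simp [JF, h]

lemma JF_smul (c : ℂ) (x : HF) : JF (c • x) = conj c • JF x := by
  funext i j
  by_cases h : (i : ℕ) < 4 <;> simp [JF, h]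

/-- Conjugation T ↦ J_F ∘ T ∘ J_F, a ℂ-linear operator on H_F. -/
def conjByJ (T : Module.End ℂ HF) : Module.End ℂ HF where
  toFun ξ := JF (T (JF ξ))
  map_add' x y := by
    show JF (T (JF (x + y))) = JF (T (JF x)) + JF (T (JF y))
    rw [JF_add, map_add, JF_add]
  map_smul' c x := by
    show JF (T (JF (c • x))) = c • JF (T (JF x))
    rw [JF_smul, _root_.map_smul, JF_smul, Complex.conj_conj]

abbrev E8 (i j : Fin 8) : M8 := Matrix.single i j 1
abbrev E4 (i j : Fin 4) : M4 := Matrix.single i j 1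

def M1mat (Yν Ye YR : ℂ) : M8 :=
  conj Yν • E8 0 2 + conj Ye • E8 1 3 + Yν • E8 2 0 + Ye • E8 3 1
    + conj YR • E8 0 4 + YR • E8 4 0

def M2mat (Yu Yd : ℂ) : M8 :=
  conj Yu • E8 0 2 + conj Yd • E8 1 3 + Yu • E8 2 0 + Yd • E8 3 1

def N1mat (Yν Ye : ℂ) : M4 :=
  conj Yν • E4 0 2 + conj Ye • E4 1 3 + Yν • E4 2 0 + Ye • E4 3 1

def N2mat (Yu Yd : ℂ) : M4 :=
  conj Yu • E4 0 2 + conj Yd • E4 1 3 + Yu • E4 2 0 + Yd • E4 3 1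

/-- The internal Dirac operator D_F (one generation). -/
def DF (Yν Ye Yu Yd YR : ℂ) : Module.End ℂ HF :=
  lrOp (M1mat Yν Ye YR) (E4 0 0) + lrOp (M2mat Yu Yd) (1 - E4 0 0)
    + lrOp (E8 4 4) (N1mat Yν Ye) + lrOp (E8 5 5 + E8 6 6 + E8 7 7) (N2mat Yu Yd)

/-- Generating set of the Clifford algebra: π_F(A_F) ∪ [D_F, π_F(A_F)]. -/
def genSet (Yν Ye Yu Yd YR : ℂ) : Set (Module.End ℂ HF) :=
  piFSet ∪ { T | ∃ l q m, IsQuat q ∧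
    T = DF Yν Ye Yu Yd YR * piF l q m - piF l q m * DF Yν Ye Yu Yd YR }

/-- The Clifford algebra Cl_{D_F}(A_F). -/
def ClDF (Yν Ye Yu Yd YR : ℂ) : Subalgebra ℂ (Module.End ℂ HF) :=
  Algebra.adjoin ℂ (genSet Yν Ye Yu Yd YR)

/-- Grading χ_F. -/
def G1 : M8 := Matrix.diagonal ![1, 1, -1, -1, 0, 0, 0, 0]
def G2 : M8 := Matrix.diagonal ![0, 0, 0, 0, -1, -1, -1, -1]
def G3 : M4 := Matrix.diagonal ![1, 1, -1, -1]

def chiF : Module.End ℂ HF := lmul G1 + lrOp G2 G3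

/-- The block-diagonal 8×8 matrix diag(a, λ, m) with blocks of sizes 4, 1, 3. -/
def diagALM (a : M4) (l : ℂ) (m : M3) : M8 :=
  Matrix.of fun i j =>
    if h : (i : ℕ) < 4 ∧ (j : ℕ) < 4 then a ⟨(i : ℕ), h.1⟩ ⟨(j : ℕ), h.2⟩
    else if i = 4 ∧ j = 4 then l
    else if h : 5 ≤ (i : ℕ) ∧ 5 ≤ (j : ℕ) then
      m ⟨(i : ℕ) - 5, by have := i.isLt; omega⟩ ⟨(j : ℕ) - 5, by have := j.isLt; omega⟩
    else 0

/-- The operator ξ ↦ diag(a,λ,m) ξ e₁₁ + diag(b,λ,m) ξ (1₄ − e₁₁). -/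
def Bop (a b : M4) (l : ℂ) (m : M3) : Module.End ℂ HF :=
  lrOp (diagALM a l m) (E4 0 0) + lrOp (diagALM b l m) (1 - E4 0 0)

/-- The algebra B of Lemma (B), as a set of operators. -/
def BSet : Set (Module.End ℂ HF) := { T | ∃ a b l m, T = Bop a b l m }

/-- The commutant C_F of P(A_F) in M₈(ℂ), as a set. -/
def CFSet : Set M8 := { X | ∃ q11 q12 q21 q22 α β δ : ℂ,
  X = q11 • E8 0 0 + q12 • E8 0 4 + q21 • E8 4 0 + q22 • E8 4 4
    + α • E8 1 1 + β • (E8 2 2 + E8 3 3) + δ • (E8 5 5 + E8 6 6 + E8 7 7) }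

/-- The block-diagonal 4×4 matrix diag(λ, m). -/
def diagLM (l : ℂ) (m : M3) : M4 :=
  Matrix.of fun i j =>
    if i = 0 ∧ j = 0 then l
    else if h : 1 ≤ (i : ℕ) ∧ 1 ≤ (j : ℕ) then
      m ⟨(i : ℕ) - 1, by have := i.isLt; omega⟩ ⟨(j : ℕ) - 1, by have := j.isLt; omega⟩
    else 0

/-- The block-diagonal 4×4 matrix diag(λ, conj λ, q). -/
def diagLLQ (l : ℂ) (q : M2) : M4 :=
  Matrix.of fun i j =>
    if i = 0 ∧ j = 0 then l
    else if i = 1 ∧ j = 1 then conj l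
    else if h : 2 ≤ (i : ℕ) ∧ 2 ≤ (j : ℕ) then
      q ⟨(i : ℕ) - 2, by have := i.isLt; omega⟩ ⟨(j : ℕ) - 2, by have := j.isLt; omega⟩
    else 0

/-- E_u = diag(1₄, 0₄) ∈ M₈(ℂ). -/
def Eu : M8 := Matrix.of fun i j => if i = j ∧ (i : ℕ) < 4 then 1 else 0

/-- E_l = diag(0₄, 1₄) ∈ M₈(ℂ). -/
def El : M8 := Matrix.of fun i j => if i = j ∧ 4 ≤ (i : ℕ) then 1 else 0

/-- The block-diagonal 8×8 matrix diag(b, c) with two 4×4 blocks. -/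
def diag44 (b c : M4) : M8 :=
  Matrix.of fun i j =>
    if h : (i : ℕ) < 4 ∧ (j : ℕ) < 4 then b ⟨(i : ℕ), h.1⟩ ⟨(j : ℕ), h.2⟩
    else if h : 4 ≤ (i : ℕ) ∧ 4 ≤ (j : ℕ) then
      c ⟨(i : ℕ) - 4, by have := i.isLt; omega⟩ ⟨(j : ℕ) - 4, by have := j.isLt; omega⟩
    else 0

section Aux13

/-- sum of lower projections E8 5 5 + E8 6 6 + E8 7 7 -/
def Gd3 : M8 := E8 5 5 + E8 6 6 + E8 7 7

/-- The candidate form of elements of J B J. -/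
def Sop (a b : M4) (l : ℂ) (m : M3) : Module.End ℂ HF :=
  lrOp Eu (diagLM l m) + lrOp (E8 4 4) a + lrOp Gd3 b

lemma lrOp_apply (A : M8) (B : M4) (ξ : HF) : lrOp A B ξ = A * ξ * B := rfl

lemma lrOp_mul (A C : M8) (B D : M4) : lrOp A B * lrOp C D = lrOp (A * C) (D * B) := by
  ext ξ : 1
  simp [lrOp_apply, Module.End.mul_apply, Matrix.mul_assoc]

lemma lrOp_add_right (A : M8) (B B' : M4) :
    lrOp A (B + B') = lrOp A B + lrOp A B' := by
  ext ξ : 1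
  simp [lrOp_apply, Matrix.mul_add]

lemma lrOp_smul_left (c : ℂ) (A : M8) (B : M4) :
    lrOp (c • A) B = c • lrOp A B := by
  ext ξ : 1
  simp [lrOp_apply, Matrix.smul_mul]

-- generic entry lemmas
lemma Eu_mul_apply (X : HF) (i : Fin 8) (j : Fin 4) :
    (Eu * X) i j = if (i : ℕ) < 4 then X i j else 0 := by
  simp only [Matrix.mul_apply, Eu, Matrix.of_apply, ite_and, ite_mul, one_mul, zero_mul]
  rw [Finset.sum_ite_eq Finset.univ i (fun k => if (i:ℕ) < 4 then X k j else 0)]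
  simp

lemma stdb8_mul_apply (p q : Fin 8) (X : HF) (i : Fin 8) (j : Fin 4) :
    ((Matrix.single p q (1:ℂ) : M8) * X) i j = if i = p then X q j else 0 := by
  simp only [Matrix.mul_apply, Matrix.single, Matrix.of_apply, ite_and, ite_mul, one_mul,
    zero_mul]
  by_cases h : i = p
  · subst h
    simp [Finset.sum_ite_eq Finset.univ q (fun k => X k j)]
  · rw [Finset.sum_eq_zero]
    · simp [h]
    intro k _
    rcases eq_or_ne p i with hp | hp
    · exact absurd hp.symm h
    · simp [hp]

lemma Gd3_mul_apply (X : HF) (i : Fin 8) (j : Fin 4) :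
    (Gd3 * X) i j = if 5 ≤ (i : ℕ) then X i j else 0 := by
  simp only [Gd3, Matrix.add_mul, Matrix.add_apply, stdb8_mul_apply]
  fin_cases i <;> simp

lemma mul_stdb4_apply (p q : Fin 4) (X : HF) (i : Fin 8) (j : Fin 4) :
    (X * (Matrix.single p q (1:ℂ) : M4)) i j = if j = q then X i p else 0 := by
  simp only [Matrix.mul_apply, Matrix.single, Matrix.of_apply, ite_and, mul_ite, mul_one,
    mul_zero]
  by_cases h : j = q
  · subst h
    simp [Finset.sum_ite_eq' Finset.univ p (fun k => X i k)]
  · rw [Finset.sum_eq_zero]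
    · simp [h]
    intro k _
    rcases eq_or_ne q j with hp | hp
    · exact absurd hp.symm h
    · simp [hp]

lemma stdbHF_apply (k : Fin 8) (c : Fin 4) (i : Fin 8) (j : Fin 4) :
    (Matrix.single k c (1:ℂ) : HF) i j = if i = k ∧ j = c then 1 else 0 := by
  simp only [Matrix.single, Matrix.of_apply]
  rcases eq_or_ne i k with h1 | h1 <;> rcases eq_or_ne j c with h2 | h2
  · simp [h1, h2]
  · simp [h1, h2, Ne.symm h2]
  · simp [h1, h2, Ne.symm h1]
  · simp [h1, h2, Ne.symm h1, Ne.symm h2]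

end Aux13
section Aux13b

-- generic std basis multiplication lemmas (square 8 and 4)
lemma stdb8_mul_apply8 (p q : Fin 8) (X : M8) (i j : Fin 8) :
    ((Matrix.single p q (1:ℂ) : M8) * X) i j = if i = p then X q j else 0 := by
  rcases eq_or_ne i p with h | h
  · subst h; simp
  · simp [h, Matrix.single_mul_apply_of_ne, h]

lemma mul_stdb8_apply8 (p q : Fin 8) (X : M8) (i j : Fin 8) :
    (X * (Matrix.single p q (1:ℂ) : M8)) i j = if j = q then X i p else 0 := by
  rcases eq_or_ne j q with h | h
  · subst h; simp
  · simp [h]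

lemma mul_stdb4_apply4 (p q : Fin 4) (X : M4) (i j : Fin 4) :
    (X * (Matrix.single p q (1:ℂ) : M4)) i j = if j = q then X i p else 0 := by
  rcases eq_or_ne j q with h | h
  · subst h; simp
  · simp [h]

lemma stdb4_mul_apply4 (p q : Fin 4) (X : M4) (i j : Fin 4) :
    ((Matrix.single p q (1:ℂ) : M4) * X) i j = if i = p then X q j else 0 := by
  rcases eq_or_ne i p with h | h
  · subst h; simp
  · simp [h]

lemma Eu_mul_apply8 (X : M8) (i j : Fin 8) :
    (Eu * X) i j = if (i : ℕ) < 4 then X i j else 0 := by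
  simp only [Matrix.mul_apply, Eu, Matrix.of_apply, ite_and, ite_mul, one_mul, zero_mul]
  rw [Finset.sum_ite_eq Finset.univ i (fun k => if (i:ℕ) < 4 then X k j else 0)]
  simp

lemma mul_Eu_apply8 (X : M8) (i j : Fin 8) :
    (X * Eu) i j = if (j : ℕ) < 4 then X i j else 0 := by
  simp only [Matrix.mul_apply, Eu, Matrix.of_apply, ite_and, mul_ite, mul_one, mul_zero]
  have : ∀ k : Fin 8, (if k = j then if (k:ℕ) < 4 then X i k else 0 else 0)
      = (if k = j then if (j:ℕ) < 4 then X i j else 0 else 0) := by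
    intro k; rcases eq_or_ne k j with h | h <;> simp [h]
  rw [Finset.sum_congr rfl (fun k _ => this k)]
  rw [Finset.sum_ite_eq' Finset.univ j (fun _ => if (j:ℕ) < 4 then X i j else 0)]
  simp

lemma Gd3_mul_apply8 (X : M8) (i j : Fin 8) :
    (Gd3 * X) i j = if 5 ≤ (i : ℕ) then X i j else 0 := by
  simp only [Gd3, Matrix.add_mul, Matrix.add_apply, stdb8_mul_apply8]
  fin_cases i <;> simp

lemma mul_Gd3_apply8 (X : M8) (i j : Fin 8) :
    (X * Gd3) i j = if 5 ≤ (j : ℕ) then X i j else 0 := by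
  simp only [Gd3, Matrix.mul_add, Matrix.add_apply, mul_stdb8_apply8]
  fin_cases j <;> simp

-- entry lemmas for diagALM
lemma diagALM_apply_ul (a : M4) (l : ℂ) (m : M3) {i j : Fin 8}
    (hi : (i:ℕ) < 4) (hj : (j:ℕ) < 4) :
    diagALM a l m i j = a ⟨i, hi⟩ ⟨j, hj⟩ := by
  simp only [diagALM, Matrix.of_apply]
  rw [dif_pos ⟨hi, hj⟩]

lemma diagALM_apply_44 (a : M4) (l : ℂ) (m : M3) :
    diagALM a l m 4 4 = l := by
  simp only [diagALM, Matrix.of_apply]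
  rw [dif_neg (by decide)]
  simp

lemma diagALM_apply_lr (a : M4) (l : ℂ) (m : M3) {i j : Fin 8}
    (hi : 5 ≤ (i:ℕ)) (hj : 5 ≤ (j:ℕ)) :
    diagALM a l m i j = m ⟨(i:ℕ) - 5, by have := i.isLt; omega⟩
      ⟨(j:ℕ) - 5, by have := j.isLt; omega⟩ := by
  simp only [diagALM, Matrix.of_apply]
  rw [dif_neg (by omega), if_neg (by
    rintro ⟨r1, r2⟩
    have := congrArg Fin.val r1
    simp at this; omega), dif_pos ⟨hi, hj⟩]

lemma diagALM_apply_off (a : M4) (l : ℂ) (m : M3) {i j : Fin 8}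
    (h : ¬((i:ℕ) < 4 ∧ (j:ℕ) < 4)) (h2 : ¬((i:ℕ) = 4 ∧ (j:ℕ) = 4))
    (h3 : ¬(5 ≤ (i:ℕ) ∧ 5 ≤ (j:ℕ))) :
    diagALM a l m i j = 0 := by
  simp only [diagALM, Matrix.of_apply]
  rw [dif_neg h, if_neg (by
    rintro ⟨r1, r2⟩
    have t1 := congrArg Fin.val r1
    have t2 := congrArg Fin.val r2
    simp at t1 t2
    exact h2 ⟨t1, t2⟩), dif_neg h3]

lemma fin8_val_eq_four {i : Fin 8} (h : (i:ℕ) = 4) : i = 4 := by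
  apply Fin.ext; simpa using h

-- commutation identities
lemma diagALM_mul_Eu (a : M4) (l : ℂ) (m : M3) :
    diagALM a l m * Eu = Eu * diagALM a l m := by
  ext i j
  rw [mul_Eu_apply8, Eu_mul_apply8]
  by_cases hi : (i:ℕ) < 4 <;> by_cases hj : (j:ℕ) < 4 <;> simp [hi, hj]
  · rw [diagALM_apply_off a l m (by omega) (by omega) (by omega)]
  · rw [diagALM_apply_off a l m (by omega) (by omega) (by omega)]

lemma diagALM_mul_F (a : M4) (l : ℂ) (m : M3) :
    diagALM a l m * E8 4 4 = l • E8 4 4 := by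
  ext i j
  rw [mul_stdb8_apply8]
  rcases eq_or_ne j 4 with hj | hj
  · subst hj
    rcases eq_or_ne i 4 with hi | hi
    · subst hi; simp [diagALM_apply_44]
    · have hiv : (i:ℕ) ≠ 4 := fun h => hi (fin8_val_eq_four h)
      rw [if_pos rfl, diagALM_apply_off a l m
        (by simp only [show ((4:Fin 8):ℕ) = 4 from rfl]; omega)
        (by simp only [show ((4:Fin 8):ℕ) = 4 from rfl]; omega)
        (by simp only [show ((4:Fin 8):ℕ) = 4 from rfl]; omega)]
      simp [Matrix.single, hi, Ne.symm hi]
  · simp [hj, Matrix.single, Ne.symm hj]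

lemma F_mul_diagALM (a : M4) (l : ℂ) (m : M3) :
    E8 4 4 * diagALM a l m = l • E8 4 4 := by
  ext i j
  rw [stdb8_mul_apply8]
  rcases eq_or_ne i 4 with hi | hi
  · subst hi
    rcases eq_or_ne j 4 with hj | hj
    · subst hj; simp [diagALM_apply_44]
    · have hjv : (j:ℕ) ≠ 4 := fun h => hj (fin8_val_eq_four h)
      rw [if_pos rfl, diagALM_apply_off a l m
        (by simp only [show ((4:Fin 8):ℕ) = 4 from rfl]; omega)
        (by simp only [show ((4:Fin 8):ℕ) = 4 from rfl]; omega)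
        (by simp only [show ((4:Fin 8):ℕ) = 4 from rfl]; omega)]
      simp [Matrix.single, hj, Ne.symm hj]
  · simp [hi, Matrix.single, Ne.symm hi]

lemma diagM_apply (m : M3) (i j : Fin 8) :
    diagALM 0 0 m i j = if h : 5 ≤ (i:ℕ) ∧ 5 ≤ (j:ℕ) then
      m ⟨(i:ℕ) - 5, by have := i.isLt; omega⟩ ⟨(j:ℕ) - 5, by have := j.isLt; omega⟩
    else 0 := by
  by_cases h : 5 ≤ (i:ℕ) ∧ 5 ≤ (j:ℕ)
  · rw [dif_pos h, diagALM_apply_lr 0 0 m h.1 h.2]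
  · rw [dif_neg h]
    by_cases hul : (i:ℕ) < 4 ∧ (j:ℕ) < 4
    · rw [diagALM_apply_ul 0 0 m hul.1 hul.2]; simp
    · by_cases h44 : (i:ℕ) = 4 ∧ (j:ℕ) = 4
      · rw [fin8_val_eq_four h44.1, fin8_val_eq_four h44.2, diagALM_apply_44]
      · exact diagALM_apply_off 0 0 m hul h44 h

lemma diagALM_mul_Gd3 (a : M4) (l : ℂ) (m : M3) :
    diagALM a l m * Gd3 = diagALM 0 0 m := by
  ext i j
  rw [mul_Gd3_apply8, diagM_apply]
  by_cases hj : 5 ≤ (j:ℕ)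
  · rw [if_pos hj]
    by_cases hi : 5 ≤ (i:ℕ)
    · rw [dif_pos ⟨hi, hj⟩, diagALM_apply_lr a l m hi hj]
    · rw [dif_neg (by omega), diagALM_apply_off a l m (by omega) (by omega) (by omega)]
  · rw [if_neg hj, dif_neg (by omega)]

lemma Gd3_mul_diagALM (a : M4) (l : ℂ) (m : M3) :
    Gd3 * diagALM a l m = diagALM 0 0 m := by
  ext i j
  rw [Gd3_mul_apply8, diagM_apply]
  by_cases hi : 5 ≤ (i:ℕ)
  · rw [if_pos hi]
    by_cases hj : 5 ≤ (j:ℕ)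
    · rw [dif_pos ⟨hi, hj⟩, diagALM_apply_lr a l m hi hj]
    · rw [dif_neg (by omega), diagALM_apply_off a l m (by omega) (by omega) (by omega)]
  · rw [if_neg hi, dif_neg (by omega)]

-- diagLM lemmas
lemma diagLM_apply_00 (l : ℂ) (m : M3) : diagLM l m 0 0 = l := by simp [diagLM]

lemma diagLM_apply_lr (l : ℂ) (m : M3) {i j : Fin 4} (hi : 1 ≤ (i:ℕ)) (hj : 1 ≤ (j:ℕ)) :
    diagLM l m i j = m ⟨(i:ℕ) - 1, by have := i.isLt; omega⟩
      ⟨(j:ℕ) - 1, by have := j.isLt; omega⟩ := by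
  simp only [diagLM, Matrix.of_apply]
  rw [if_neg (by
    rintro ⟨r1, r2⟩
    have := congrArg Fin.val r1
    simp at this; omega), dif_pos ⟨hi, hj⟩]

lemma diagLM_apply_off (l : ℂ) (m : M3) {i j : Fin 4}
    (h : ¬((i:ℕ) = 0 ∧ (j:ℕ) = 0)) (h2 : ¬(1 ≤ (i:ℕ) ∧ 1 ≤ (j:ℕ))) :
    diagLM l m i j = 0 := by
  simp only [diagLM, Matrix.of_apply]
  rw [if_neg (by
    rintro ⟨r1, r2⟩
    have t1 := congrArg Fin.val r1
    have t2 := congrArg Fin.val r2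
    simp at t1 t2
    exact h ⟨by simp [t1], by simp [t2]⟩), dif_neg h2]

lemma fin4_val_eq_zero {i : Fin 4} (h : (i:ℕ) = 0) : i = 0 := by
  apply Fin.ext; simpa using h

lemma diagLM_mul_P (l : ℂ) (m : M3) :
    diagLM l m * E4 0 0 = l • E4 0 0 := by
  ext i j
  rw [mul_stdb4_apply4]
  rcases eq_or_ne j 0 with hj | hj
  · subst hj
    rcases eq_or_ne i 0 with hi | hi
    · subst hi; simp [diagLM_apply_00]
    · have hiv : (i:ℕ) ≠ 0 := fun h => hi (fin4_val_eq_zero h)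
      rw [if_pos rfl, diagLM_apply_off l m
        (by simp only [show ((0:Fin 4):ℕ) = 0 from rfl]; omega)
        (by simp only [show ((0:Fin 4):ℕ) = 0 from rfl]; omega)]
      simp [Matrix.single, hi, Ne.symm hi]
  · simp [hj, Matrix.single, Ne.symm hj]

lemma P_mul_diagLM (l : ℂ) (m : M3) :
    E4 0 0 * diagLM l m = l • E4 0 0 := by
  ext i j
  rw [stdb4_mul_apply4]
  rcases eq_or_ne i 0 with hi | hi
  · subst hi
    rcases eq_or_ne j 0 with hj | hj
    · subst hj; simp [diagLM_apply_00]
    · have hjv : (j:ℕ) ≠ 0 := fun h => hj (fin4_val_eq_zero h)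
      rw [if_pos rfl, diagLM_apply_off l m
        (by simp only [show ((0:Fin 4):ℕ) = 0 from rfl]; omega)
        (by simp only [show ((0:Fin 4):ℕ) = 0 from rfl]; omega)]
      simp [Matrix.single, hj, Ne.symm hj]
  · simp [hi, Matrix.single, Ne.symm hi]

end Aux13b
section Aux13c

lemma lrOp_zero_left (B : M4) : lrOp 0 B = 0 := by
  ext ξ : 1; simp [lrOp_apply]

lemma lrOp_sub_right (A : M8) (B B' : M4) :
    lrOp A (B - B') = lrOp A B - lrOp A B' := by
  ext ξ : 1; simp [lrOp_apply, Matrix.mul_sub]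

lemma lrOp_add_left (A A' : M8) (B : M4) :
    lrOp (A + A') B = lrOp A B + lrOp A' B := by
  ext ξ : 1; simp [lrOp_apply, Matrix.add_mul]

lemma lrOp_one_one : lrOp 1 1 = (1 : Module.End ℂ HF) := by
  ext ξ : 1; simp [lrOp_apply]

lemma Eu_mul_Eu : Eu * Eu = Eu := by
  ext i j
  rw [mul_Eu_apply8]
  by_cases hj : (j:ℕ) < 4
  · simp [hj]
  · rw [if_neg hj]
    simp only [Eu, Matrix.of_apply]
    rw [if_neg]
    rintro ⟨h1, h2⟩
    exact hj (h1 ▸ h2)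

lemma F_mul_F : (E8 4 4) * (E8 4 4) = E8 4 4 := by
  simp

lemma Gd3_mul_Gd3 : Gd3 * Gd3 = Gd3 := by
  simp [Gd3, Matrix.add_mul, Matrix.mul_add, Matrix.single_mul_single_of_ne]

lemma Eu_mul_F : Eu * E8 4 4 = 0 := by
  ext i j
  rw [Eu_mul_apply8]
  by_cases hi : (i:ℕ) < 4
  · rw [if_pos hi]
    simp only [Matrix.single, Matrix.of_apply, Matrix.zero_apply]
    rw [if_neg]
    rintro ⟨h1, -⟩
    have := congrArg Fin.val h1
    simp at this; omega
  · simp [hi]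

lemma F_mul_Eu : E8 4 4 * Eu = 0 := by
  ext i j
  rw [stdb8_mul_apply8]
  rcases eq_or_ne i 4 with hi | hi
  · rw [hi, if_pos rfl]
    simp only [Eu, Matrix.of_apply, Matrix.zero_apply]
    rw [if_neg]
    rintro ⟨h1, h2⟩
    exact absurd h2 (by decide)
  · simp [hi]

lemma Eu_mul_Gd3 : Eu * Gd3 = 0 := by
  ext i j
  rw [mul_Gd3_apply8]
  by_cases hj : 5 ≤ (j:ℕ)
  · rw [if_pos hj]
    simp only [Eu, Matrix.of_apply, Matrix.zero_apply]
    rw [if_neg]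
    rintro ⟨h1, h2⟩
    have := congrArg Fin.val h1
    omega
  · simp [hj]

lemma Gd3_mul_Eu : Gd3 * Eu = 0 := by
  ext i j
  rw [Gd3_mul_apply8]
  by_cases hi : 5 ≤ (i:ℕ)
  · rw [if_pos hi]
    simp only [Eu, Matrix.of_apply, Matrix.zero_apply]
    rw [if_neg]
    rintro ⟨h1, h2⟩
    have := congrArg Fin.val h1
    omega
  · simp [hi]

lemma F_mul_Gd3 : E8 4 4 * Gd3 = 0 := by
  simp [Gd3, Matrix.mul_add, Matrix.single_mul_single_of_ne]

lemma Gd3_mul_F : Gd3 * E8 4 4 = 0 := by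
  simp [Gd3, Matrix.add_mul, Matrix.single_mul_single_of_ne]

lemma sum_one : Eu + E8 4 4 + Gd3 = (1 : M8) := by
  ext i j
  fin_cases i <;> fin_cases j <;>
    simp [Eu, Gd3, Matrix.single, Matrix.one_apply] <;> decide

lemma diagLM_mul_diagLM (l l' : ℂ) (m m' : M3) :
    diagLM l m * diagLM l' m' = diagLM (l * l') (m * m') := by
  ext i j
  fin_cases i <;> fin_cases j <;>
    simp [diagLM, Matrix.mul_apply, Fin.sum_univ_four, Fin.sum_univ_three,
      show ((0:Fin 4):ℕ)=0 from rfl, show ((1:Fin 4):ℕ)=1 from rfl,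
      show ((2:Fin 4):ℕ)=2 from rfl, show ((3:Fin 4):ℕ)=3 from rfl]

lemma diagLM_one : diagLM 1 1 = (1 : M4) := by
  ext i j
  fin_cases i <;> fin_cases j <;>
    simp [diagLM, Matrix.one_apply,
      show ((0:Fin 4):ℕ)=0 from rfl, show ((1:Fin 4):ℕ)=1 from rfl,
      show ((2:Fin 4):ℕ)=2 from rfl, show ((3:Fin 4):ℕ)=3 from rfl] <;> decide

-- the key commutation lemma
lemma bop_sop_commute (a b : M4) (l : ℂ) (m : M3) (a' b' : M4) (l' : ℂ) (m' : M3) :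
    Bop a b l m * Sop a' b' l' m' = Sop a' b' l' m' * Bop a b l m := by
  simp only [Bop, Sop, add_mul, mul_add, lrOp_mul]
  simp only [diagALM_mul_Eu, diagALM_mul_F, F_mul_diagALM, diagALM_mul_Gd3, Gd3_mul_diagALM,
    Matrix.mul_sub, Matrix.sub_mul, Matrix.mul_one, Matrix.one_mul, diagLM_mul_P, P_mul_diagLM,
    lrOp_sub_right]
  abel

lemma sop_mul_sop (a b : M4) (l : ℂ) (m : M3) (a' b' : M4) (l' : ℂ) (m' : M3) :
    Sop a b l m * Sop a' b' l' m' = Sop (a' * a) (b' * b) (l' * l) (m' * m) := by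
  simp only [Sop, add_mul, mul_add, lrOp_mul]
  simp only [Eu_mul_Eu, F_mul_F, Gd3_mul_Gd3, Eu_mul_F, F_mul_Eu, Eu_mul_Gd3, Gd3_mul_Eu,
    F_mul_Gd3, Gd3_mul_F, diagLM_mul_diagLM, lrOp_zero_left, add_zero, zero_add]

lemma sop_one : Sop 1 1 1 1 = (1 : Module.End ℂ HF) := by
  simp only [Sop, diagLM_one]
  rw [← lrOp_add_left, ← lrOp_add_left, sum_one, lrOp_one_one]

end Aux13c
section Aux13d

lemma conjByJ_apply' (T : Module.End ℂ HF) (ξ : HF) : conjByJ T ξ = JF (T (JF ξ)) := rfl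

lemma Bop_apply' (a b : M4) (l : ℂ) (m : M3) (ξ : HF) :
    Bop a b l m ξ = diagALM a l m * ξ * E4 0 0 + diagALM b l m * ξ * (1 - E4 0 0) := rfl

lemma Sop_apply' (a b : M4) (l : ℂ) (m : M3) (ξ : HF) :
    Sop a b l m ξ = Eu * ξ * diagLM l m + E8 4 4 * ξ * a + Gd3 * ξ * b := rfl

section rowlemmas
variable (a : M4) (l : ℂ) (m : M3) (η : HF) (j : Fin 4)

lemma dALM_row0 : (diagALM a l m * η) 0 j
    = a 0 0 * η 0 j + a 0 1 * η 1 j + a 0 2 * η 2 j + a 0 3 * η 3 j := by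
  rw [Matrix.mul_apply, Fin.sum_univ_eight]
  simp [diagALM,
    show ((0:Fin 8):ℕ)=0 from rfl, show ((1:Fin 8):ℕ)=1 from rfl,
    show ((2:Fin 8):ℕ)=2 from rfl, show ((3:Fin 8):ℕ)=3 from rfl,
    show ((4:Fin 8):ℕ)=4 from rfl, show ((5:Fin 8):ℕ)=5 from rfl,
    show ((6:Fin 8):ℕ)=6 from rfl, show ((7:Fin 8):ℕ)=7 from rfl]

lemma dALM_row1 : (diagALM a l m * η) 1 j
    = a 1 0 * η 0 j + a 1 1 * η 1 j + a 1 2 * η 2 j + a 1 3 * η 3 j := by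
  rw [Matrix.mul_apply, Fin.sum_univ_eight]
  simp [diagALM,
    show ((0:Fin 8):ℕ)=0 from rfl, show ((1:Fin 8):ℕ)=1 from rfl,
    show ((2:Fin 8):ℕ)=2 from rfl, show ((3:Fin 8):ℕ)=3 from rfl,
    show ((4:Fin 8):ℕ)=4 from rfl, show ((5:Fin 8):ℕ)=5 from rfl,
    show ((6:Fin 8):ℕ)=6 from rfl, show ((7:Fin 8):ℕ)=7 from rfl]

lemma dALM_row2 : (diagALM a l m * η) 2 j
    = a 2 0 * η 0 j + a 2 1 * η 1 j + a 2 2 * η 2 j + a 2 3 * η 3 j := by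
  rw [Matrix.mul_apply, Fin.sum_univ_eight]
  simp [diagALM,
    show ((0:Fin 8):ℕ)=0 from rfl, show ((1:Fin 8):ℕ)=1 from rfl,
    show ((2:Fin 8):ℕ)=2 from rfl, show ((3:Fin 8):ℕ)=3 from rfl,
    show ((4:Fin 8):ℕ)=4 from rfl, show ((5:Fin 8):ℕ)=5 from rfl,
    show ((6:Fin 8):ℕ)=6 from rfl, show ((7:Fin 8):ℕ)=7 from rfl]

lemma dALM_row3 : (diagALM a l m * η) 3 j
    = a 3 0 * η 0 j + a 3 1 * η 1 j + a 3 2 * η 2 j + a 3 3 * η 3 j := by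
  rw [Matrix.mul_apply, Fin.sum_univ_eight]
  simp [diagALM,
    show ((0:Fin 8):ℕ)=0 from rfl, show ((1:Fin 8):ℕ)=1 from rfl,
    show ((2:Fin 8):ℕ)=2 from rfl, show ((3:Fin 8):ℕ)=3 from rfl,
    show ((4:Fin 8):ℕ)=4 from rfl, show ((5:Fin 8):ℕ)=5 from rfl,
    show ((6:Fin 8):ℕ)=6 from rfl, show ((7:Fin 8):ℕ)=7 from rfl]

lemma dALM_row4 : (diagALM a l m * η) 4 j = l * η 4 j := by
  rw [Matrix.mul_apply, Fin.sum_univ_eight]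
  simp [diagALM,
    show ((0:Fin 8):ℕ)=0 from rfl, show ((1:Fin 8):ℕ)=1 from rfl,
    show ((2:Fin 8):ℕ)=2 from rfl, show ((3:Fin 8):ℕ)=3 from rfl,
    show ((4:Fin 8):ℕ)=4 from rfl, show ((5:Fin 8):ℕ)=5 from rfl,
    show ((6:Fin 8):ℕ)=6 from rfl, show ((7:Fin 8):ℕ)=7 from rfl]

lemma dALM_row5 : (diagALM a l m * η) 5 j
    = m 0 0 * η 5 j + m 0 1 * η 6 j + m 0 2 * η 7 j := by
  rw [Matrix.mul_apply, Fin.sum_univ_eight]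
  simp [diagALM,
    show ((0:Fin 8):ℕ)=0 from rfl, show ((1:Fin 8):ℕ)=1 from rfl,
    show ((2:Fin 8):ℕ)=2 from rfl, show ((3:Fin 8):ℕ)=3 from rfl,
    show ((4:Fin 8):ℕ)=4 from rfl, show ((5:Fin 8):ℕ)=5 from rfl,
    show ((6:Fin 8):ℕ)=6 from rfl, show ((7:Fin 8):ℕ)=7 from rfl]

lemma dALM_row6 : (diagALM a l m * η) 6 j
    = m 1 0 * η 5 j + m 1 1 * η 6 j + m 1 2 * η 7 j := by
  rw [Matrix.mul_apply, Fin.sum_univ_eight]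
  simp [diagALM,
    show ((0:Fin 8):ℕ)=0 from rfl, show ((1:Fin 8):ℕ)=1 from rfl,
    show ((2:Fin 8):ℕ)=2 from rfl, show ((3:Fin 8):ℕ)=3 from rfl,
    show ((4:Fin 8):ℕ)=4 from rfl, show ((5:Fin 8):ℕ)=5 from rfl,
    show ((6:Fin 8):ℕ)=6 from rfl, show ((7:Fin 8):ℕ)=7 from rfl]

lemma dALM_row7 : (diagALM a l m * η) 7 j
    = m 2 0 * η 5 j + m 2 1 * η 6 j + m 2 2 * η 7 j := by
  rw [Matrix.mul_apply, Fin.sum_univ_eight]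
  simp [diagALM,
    show ((0:Fin 8):ℕ)=0 from rfl, show ((1:Fin 8):ℕ)=1 from rfl,
    show ((2:Fin 8):ℕ)=2 from rfl, show ((3:Fin 8):ℕ)=3 from rfl,
    show ((4:Fin 8):ℕ)=4 from rfl, show ((5:Fin 8):ℕ)=5 from rfl,
    show ((6:Fin 8):ℕ)=6 from rfl, show ((7:Fin 8):ℕ)=7 from rfl]

end rowlemmas

set_option maxHeartbeats 4000000 in
lemma conjByJ_bop (a b : M4) (l : ℂ) (m : M3) :
    conjByJ (Bop a b l m) = Sop aᴴ bᴴ (conj l) mᴴ := by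
  apply LinearMap.ext; intro ξ
  ext i j
  rw [conjByJ_apply', Bop_apply', Sop_apply']
  fin_cases i <;> fin_cases j <;>
    simp [JF, Matrix.mul_apply, Fin.sum_univ_four, Matrix.add_apply, Matrix.sub_apply,
      Matrix.mul_sub, Matrix.mul_one,
      dALM_row0, dALM_row1, dALM_row2, dALM_row3, dALM_row4, dALM_row5, dALM_row6, dALM_row7,
      diagLM, Eu, Gd3, Matrix.single, Matrix.conjTranspose_apply,
      show ((0:Fin 8):ℕ)=0 from rfl, show ((1:Fin 8):ℕ)=1 from rfl,
      show ((2:Fin 8):ℕ)=2 from rfl, show ((3:Fin 8):ℕ)=3 from rfl,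
      show ((4:Fin 8):ℕ)=4 from rfl, show ((5:Fin 8):ℕ)=5 from rfl,
      show ((6:Fin 8):ℕ)=6 from rfl, show ((7:Fin 8):ℕ)=7 from rfl,
      show ((0:Fin 4):ℕ)=0 from rfl, show ((1:Fin 4):ℕ)=1 from rfl,
      show ((2:Fin 4):ℕ)=2 from rfl, show ((3:Fin 4):ℕ)=3 from rfl,
      _root_.map_add, _root_.map_mul, Complex.conj_conj] <;>
    try (rw [Fin.sum_univ_eight]
         simp [diagALM, _root_.map_add, _root_.map_mul, Complex.conj_conj,
           show ((0:Fin 8):ℕ)=0 from rfl, show ((1:Fin 8):ℕ)=1 from rfl,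
           show ((2:Fin 8):ℕ)=2 from rfl, show ((3:Fin 8):ℕ)=3 from rfl,
           show ((4:Fin 8):ℕ)=4 from rfl, show ((5:Fin 8):ℕ)=5 from rfl,
           show ((6:Fin 8):ℕ)=6 from rfl, show ((7:Fin 8):ℕ)=7 from rfl]
         ring)

end Aux13d
section Aux13e

def emb4 (p : Fin 4) : Fin 8 := Fin.castLE (by omega) p
def emb5 (r : Fin 3) : Fin 8 := ⟨(r:ℕ) + 5, by omega⟩

abbrev Eb (k : Fin 8) (c : Fin 4) : HF := Matrix.single k c 1

lemma emb4_zero : emb4 0 = 0 := rfl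
lemma emb5_zero : emb5 0 = 5 := rfl
lemma emb4_val (p : Fin 4) : ((emb4 p) : ℕ) = (p:ℕ) := rfl
lemma emb5_val (r : Fin 3) : ((emb5 r) : ℕ) = (r:ℕ) + 5 := rfl

lemma diagALM_zero : diagALM 0 0 0 = (0 : M8) := by
  ext i j
  rw [diagM_apply]
  split_ifs <;> simp

lemma diagALM_entry_zero (a : M4) (l : ℂ) (m : M3) {i j : Fin 8}
    (h44 : ¬((i:ℕ) = 4 ∧ (j:ℕ) = 4)) (ha : a = 0) (hm : m = 0)
    : diagALM a l m i j = 0 := by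
  by_cases hul : (i:ℕ) < 4 ∧ (j:ℕ) < 4
  · rw [diagALM_apply_ul _ _ _ hul.1 hul.2, ha]; rfl
  · by_cases hlr : 5 ≤ (i:ℕ) ∧ 5 ≤ (j:ℕ)
    · rw [diagALM_apply_lr _ _ _ hlr.1 hlr.2, hm]; rfl
    · exact diagALM_apply_off _ _ _ hul h44 hlr

lemma diagALM_l0_m0 (a : M4) {i j : Fin 8}
    (hul : ¬((i:ℕ) < 4 ∧ (j:ℕ) < 4)) : diagALM a 0 0 i j = 0 := by
  by_cases h44 : (i:ℕ) = 4 ∧ (j:ℕ) = 4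
  · rw [fin8_val_eq_four h44.1, fin8_val_eq_four h44.2, diagALM_apply_44]
  · by_cases hlr : 5 ≤ (i:ℕ) ∧ 5 ≤ (j:ℕ)
    · rw [diagALM_apply_lr _ _ _ hlr.1 hlr.2]; rfl
    · exact diagALM_apply_off _ _ _ hul h44 hlr

lemma diagALM_010 : diagALM 0 1 0 = E8 4 4 := by
  ext i j
  by_cases h44 : (i:ℕ) = 4 ∧ (j:ℕ) = 4
  · rw [fin8_val_eq_four h44.1, fin8_val_eq_four h44.2, diagALM_apply_44]
    simp
  · rw [diagALM_entry_zero 0 1 0 h44 rfl rfl]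
    symm
    simp only [Matrix.single, Matrix.of_apply]
    rw [if_neg]
    rintro ⟨r1, r2⟩
    exact h44 ⟨(congrArg Fin.val r1).symm, (congrArg Fin.val r2).symm⟩

lemma diagALM_single (p q : Fin 4) :
    diagALM (E4 p q) 0 0 = Matrix.single (emb4 p) (emb4 q) (1:ℂ) := by
  ext i j
  by_cases hul : (i:ℕ) < 4 ∧ (j:ℕ) < 4
  · rw [diagALM_apply_ul _ _ _ hul.1 hul.2]
    simp only [Matrix.single, Matrix.of_apply]
    by_cases hp : (p:ℕ) = (i:ℕ) ∧ (q:ℕ) = (j:ℕ)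
    · rw [if_pos ⟨Fin.ext hp.1, Fin.ext hp.2⟩, if_pos ⟨Fin.ext hp.1, Fin.ext hp.2⟩]
    · rw [if_neg, if_neg]
      · rintro ⟨r1, r2⟩
        exact hp ⟨congrArg Fin.val r1, congrArg Fin.val r2⟩
      · rintro ⟨r1, r2⟩
        exact hp ⟨congrArg Fin.val r1, congrArg Fin.val r2⟩
  · rw [diagALM_l0_m0 (E4 p q) hul]
    symm
    simp only [Matrix.single, Matrix.of_apply]
    rw [if_neg]
    rintro ⟨r1, r2⟩
    have t1 := congrArg Fin.val r1
    have t2 := congrArg Fin.val r2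
    rw [emb4_val] at t1
    rw [emb4_val] at t2
    exact hul ⟨by have := p.isLt; omega, by have := q.isLt; omega⟩

lemma diagALM_m_single (r s : Fin 3) :
    diagALM 0 0 (Matrix.single r s 1) = Matrix.single (emb5 r) (emb5 s) (1:ℂ) := by
  ext i j
  rw [diagM_apply]
  simp only [Matrix.single, Matrix.of_apply]
  by_cases hlr : 5 ≤ (i:ℕ) ∧ 5 ≤ (j:ℕ)
  · rw [dif_pos hlr]
    by_cases hr : (r:ℕ) = (i:ℕ) - 5 ∧ (s:ℕ) = (j:ℕ) - 5
    · rw [if_pos ⟨Fin.ext hr.1, Fin.ext hr.2⟩, if_pos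
        ⟨Fin.ext (by rw [emb5_val]; omega), Fin.ext (by rw [emb5_val]; omega)⟩]
    · rw [if_neg, if_neg]
      · rintro ⟨r1, r2⟩
        have t1 := congrArg Fin.val r1
        have t2 := congrArg Fin.val r2
        rw [emb5_val] at t1
        rw [emb5_val] at t2
        exact hr ⟨by omega, by omega⟩
      · rintro ⟨r1, r2⟩
        exact hr ⟨congrArg Fin.val r1, congrArg Fin.val r2⟩
  · rw [dif_neg hlr, if_neg]
    rintro ⟨r1, r2⟩
    have t1 := congrArg Fin.val r1
    have t2 := congrArg Fin.val r2
    rw [emb5_val] at t1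
    rw [emb5_val] at t2
    exact hlr ⟨by omega, by omega⟩

-- generator action lemmas
lemma UA_apply (p : Fin 4) (X : HF) :
    Bop (E4 p 0) 0 0 0 X = X 0 0 • Eb (emb4 p) 0 := by
  rw [Bop_apply', diagALM_single, diagALM_zero, emb4_zero]
  ext i j
  simp only [Matrix.add_apply, Matrix.zero_mul, Matrix.zero_apply, add_zero,
    mul_stdb4_apply, stdb8_mul_apply, Matrix.smul_apply, stdbHF_apply, smul_eq_mul]
  by_cases h1 : j = 0 <;> by_cases h2 : i = emb4 p <;> simp [h1, h2]

lemma UB_apply (p : Fin 4) (X : HF) :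
    Bop 0 (E4 p 0) 0 0 X
      = Matrix.of (fun i j => if i = emb4 p ∧ j ≠ 0 then X 0 j else 0) := by
  rw [Bop_apply', diagALM_single, diagALM_zero, emb4_zero]
  ext i j
  simp only [Matrix.add_apply, Matrix.zero_mul, Matrix.zero_apply, zero_add, Matrix.mul_sub,
    Matrix.mul_one, Matrix.sub_apply, mul_stdb4_apply, stdb8_mul_apply, Matrix.of_apply]
  by_cases h1 : i = emb4 p <;> by_cases h2 : j = 0 <;> simp [h1, h2]

lemma UL_apply (X : HF) :
    Bop 0 0 1 0 X = Matrix.of (fun i j => if i = 4 then X 4 j else 0) := by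
  rw [Bop_apply', diagALM_010]
  ext i j
  simp only [Matrix.add_apply, Matrix.mul_sub, Matrix.mul_one, Matrix.sub_apply,
    mul_stdb4_apply, stdb8_mul_apply, Matrix.of_apply]
  by_cases h1 : i = (4:Fin 8) <;> by_cases h2 : j = 0 <;>
    simp [h1, h2, add_sub_cancel]

lemma UM_apply (r : Fin 3) (X : HF) :
    Bop 0 0 0 (Matrix.single r 0 1) X
      = Matrix.of (fun i j => if i = emb5 r then X 5 j else 0) := by
  rw [Bop_apply', diagALM_m_single, emb5_zero]
  ext i j
  simp only [Matrix.add_apply, Matrix.mul_sub, Matrix.mul_one, Matrix.sub_apply,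
    mul_stdb4_apply, stdb8_mul_apply, Matrix.of_apply]
  by_cases h1 : i = emb5 r <;> by_cases h2 : j = 0 <;>
    simp [h1, h2, add_sub_cancel]

-- actions on basis elements
lemma UA_on_Eb (p : Fin 4) : Bop (E4 p 0) 0 0 0 (Eb 0 0) = Eb (emb4 p) 0 := by
  rw [UA_apply]
  simp [stdbHF_apply]

lemma UB_on_Eb (p : Fin 4) (c : Fin 4) (hc : c ≠ 0) :
    Bop 0 (E4 p 0) 0 0 (Eb 0 c) = Eb (emb4 p) c := by
  rw [UB_apply]
  ext i j
  simp only [Matrix.of_apply, stdbHF_apply]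
  by_cases h1 : i = emb4 p
  · by_cases h2 : j = c
    · subst h2; simp [h1, hc]
    · simp [h1, h2]
  · simp [h1]

lemma UL_on_Eb (c : Fin 4) : Bop 0 0 1 0 (Eb 4 c) = Eb 4 c := by
  rw [UL_apply]
  ext i j
  simp only [Matrix.of_apply, stdbHF_apply]
  by_cases h1 : i = (4:Fin 8) <;> simp [h1]

lemma UM_on_Eb (r : Fin 3) (c : Fin 4) :
    Bop 0 0 0 (Matrix.single r 0 1) (Eb 5 c) = Eb (emb5 r) c := by
  rw [UM_apply]
  ext i j
  simp only [Matrix.of_apply, stdbHF_apply]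
  by_cases h1 : i = emb5 r <;> simp [h1]

-- Sop on basis
lemma Sop_on_Eb (a b : M4) (l : ℂ) (m : M3) (k : Fin 8) (c : Fin 4) (i : Fin 8) (j : Fin 4) :
    Sop a b l m (Eb k c) i j =
      (if (i:ℕ) < 4 ∧ i = k then diagLM l m c j else 0)
      + (if i = 4 ∧ k = 4 then a c j else 0)
      + (if 5 ≤ (i:ℕ) ∧ i = k then b c j else 0) := by
  rw [Sop_apply']
  simp only [Matrix.add_apply]
  congr 1
  · congr 1
    · rw [Matrix.mul_apply]
      simp only [Eu_mul_apply, stdbHF_apply]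
      by_cases hi4 : (i:ℕ) < 4 <;> by_cases hik : i = k <;>
        simp [hi4, hik, ite_and, boole_mul, Finset.sum_ite_eq]
    · rw [Matrix.mul_apply]
      simp only [stdb8_mul_apply, stdbHF_apply]
      by_cases hi4 : i = (4:Fin 8) <;> by_cases hk4 : k = (4:Fin 8)
      · subst hi4; subst hk4
        simp [ite_and, boole_mul, Finset.sum_ite_eq]
      · subst hi4
        have hk4' : ¬((4:Fin 8) = k) := fun h => hk4 h.symm
        simp [hk4, hk4', ite_and]
      · subst hk4
        simp [hi4, ite_and]
      · simp [hi4, hk4, ite_and]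
  · rw [Matrix.mul_apply]
    simp only [Gd3_mul_apply, stdbHF_apply]
    by_cases hi5 : 5 ≤ (i:ℕ) <;> by_cases hik : i = k <;>
      simp [hi5, hik, ite_and, boole_mul, Finset.sum_ite_eq]

end Aux13e
section Aux13f

lemma fin4_pos_of_ne {c : Fin 4} (hc : c ≠ 0) : 1 ≤ (c:ℕ) := by
  have : (c:ℕ) ≠ 0 := fun h => hc (fin4_val_eq_zero h)
  omega

lemma emb4_ne_four (p : Fin 4) : emb4 p ≠ (4:Fin 8) := by
  intro h
  have t := congrArg Fin.val h
  rw [emb4_val, show ((4:Fin 8):ℕ) = 4 from rfl] at t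
  have := p.isLt; omega

lemma emb4_nlt5 (p : Fin 4) : ¬(5 ≤ ((emb4 p):ℕ)) := by
  rw [emb4_val]; have := p.isLt; omega

lemma emb4_lt4 (p : Fin 4) : ((emb4 p):ℕ) < 4 := p.isLt

lemma emb5_ne_four (r : Fin 3) : emb5 r ≠ (4:Fin 8) := by
  intro h
  have t := congrArg Fin.val h
  rw [emb5_val, show ((4:Fin 8):ℕ) = 4 from rfl] at t
  omega

lemma emb5_nlt4 (r : Fin 3) : ¬(((emb5 r):ℕ) < 4) := by
  rw [emb5_val]; omega

lemma emb5_ge5 (r : Fin 3) : 5 ≤ ((emb5 r):ℕ) := by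
  rw [emb5_val]; omega

lemma diagLM_row0 (l : ℂ) (m : M3) (j : Fin 4) :
    diagLM l m 0 j = if j = 0 then l else 0 := by
  rcases eq_or_ne j 0 with hj | hj
  · subst hj; simp [diagLM_apply_00]
  · rw [if_neg hj, diagLM_apply_off l m]
    · rintro ⟨-, h2⟩; exact hj (fin4_val_eq_zero h2)
    · rintro ⟨h1, -⟩
      rw [show ((0:Fin 4):ℕ) = 0 from rfl] at h1
      omega

lemma diagLM_row_ne0 (l : ℂ) (m : M3) {c : Fin 4} (hc : c ≠ 0) (j : Fin 4) :
    diagLM l m c j = if j = 0 then 0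
      else m ⟨(c:ℕ)-1, by have := c.isLt; omega⟩ ⟨(j:ℕ)-1, by have := j.isLt; omega⟩ := by
  have hc' : 1 ≤ (c:ℕ) := fin4_pos_of_ne hc
  rcases eq_or_ne j 0 with hj | hj
  · subst hj
    rw [if_pos rfl, diagLM_apply_off l m]
    · rintro ⟨h1, -⟩; omega
    · rintro ⟨-, h2⟩
      rw [show ((0:Fin 4):ℕ) = 0 from rfl] at h2
      omega
  · have hj' : 1 ≤ (j:ℕ) := fin4_pos_of_ne hj
    rw [if_neg hj, diagLM_apply_lr l m hc' hj']

-- specialized Sop row lemmas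
lemma Sop_on_Eb_row_lt4 (a b : M4) (l : ℂ) (m : M3) (p : Fin 4) (c : Fin 4)
    (i : Fin 8) (j : Fin 4) :
    Sop a b l m (Eb (emb4 p) c) i j = if i = emb4 p then diagLM l m c j else 0 := by
  rw [Sop_on_Eb]
  rcases eq_or_ne i (emb4 p) with hi | hi
  · subst hi
    rw [if_pos ⟨emb4_lt4 p, rfl⟩,
      if_neg (show ¬(emb4 p = (4:Fin 8) ∧ emb4 p = (4:Fin 8)) from
        fun h => emb4_ne_four p h.1),
      if_neg (show ¬(5 ≤ ((emb4 p):ℕ) ∧ emb4 p = emb4 p) from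
        fun h => emb4_nlt5 p h.1),
      if_pos rfl]
    simp
  · rw [if_neg (show ¬((i:ℕ) < 4 ∧ i = emb4 p) from fun h => hi h.2),
      if_neg (show ¬(i = (4:Fin 8) ∧ emb4 p = (4:Fin 8)) from
        fun h => emb4_ne_four p h.2),
      if_neg (show ¬(5 ≤ (i:ℕ) ∧ i = emb4 p) from fun h => hi h.2),
      if_neg hi]
    simp

lemma Sop_on_Eb_row4 (a b : M4) (l : ℂ) (m : M3) (c : Fin 4) (i : Fin 8) (j : Fin 4) :
    Sop a b l m (Eb 4 c) i j = if i = 4 then a c j else 0 := by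
  rw [Sop_on_Eb]
  rcases eq_or_ne i (4:Fin 8) with hi | hi
  · subst hi
    rw [if_neg (show ¬(((4:Fin 8):ℕ) < 4 ∧ (4:Fin 8) = 4) from
        fun h => absurd h.1 (by decide)),
      if_pos ⟨rfl, rfl⟩,
      if_neg (show ¬(5 ≤ ((4:Fin 8):ℕ) ∧ (4:Fin 8) = 4) from
        fun h => absurd h.1 (by decide)),
      if_pos rfl]
    simp
  · rw [if_neg (show ¬((i:ℕ) < 4 ∧ i = (4:Fin 8)) from fun h => hi h.2),
      if_neg (show ¬(i = (4:Fin 8) ∧ (4:Fin 8) = 4) from fun h => hi h.1),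
      if_neg (show ¬(5 ≤ (i:ℕ) ∧ i = (4:Fin 8)) from fun h => hi h.2),
      if_neg hi]
    simp

lemma Sop_on_Eb_row5 (a b : M4) (l : ℂ) (m : M3) (r : Fin 3) (c : Fin 4)
    (i : Fin 8) (j : Fin 4) :
    Sop a b l m (Eb (emb5 r) c) i j = if i = emb5 r then b c j else 0 := by
  rw [Sop_on_Eb]
  rcases eq_or_ne i (emb5 r) with hi | hi
  · subst hi
    rw [if_neg (show ¬(((emb5 r):ℕ) < 4 ∧ emb5 r = emb5 r) from
        fun h => emb5_nlt4 r h.1),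
      if_neg (show ¬(emb5 r = (4:Fin 8) ∧ emb5 r = (4:Fin 8)) from
        fun h => emb5_ne_four r h.1),
      if_pos ⟨emb5_ge5 r, rfl⟩,
      if_pos rfl]
    simp
  · rw [if_neg (show ¬((i:ℕ) < 4 ∧ i = emb5 r) from fun h => hi h.2),
      if_neg (show ¬(i = (4:Fin 8) ∧ emb5 r = (4:Fin 8)) from
        fun h => emb5_ne_four r h.2),
      if_neg (show ¬(5 ≤ (i:ℕ) ∧ i = emb5 r) from fun h => hi h.2),
      if_neg hi]
    simp

lemma exists_sop_of_centralizer (T : Module.End ℂ HF)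
    (hT : ∀ U ∈ BSet, U * T = T * U) :
    ∃ a b l m, T = Sop a b l m := by
  have hcomm : ∀ (a' b' : M4) (l' : ℂ) (m' : M3) (X : HF),
      Bop a' b' l' m' (T X) = T (Bop a' b' l' m' X) := by
    intro a' b' l' m' X
    have h := hT (Bop a' b' l' m') ⟨a', b', l', m', rfl⟩
    exact DFunLike.congr_fun h X
  refine ⟨Matrix.of (fun c j => T (Eb 4 c) 4 j), Matrix.of (fun c j => T (Eb 5 c) 5 j),
    T (Eb 0 0) 0 0,
    Matrix.of (fun r s =>
      T (Eb 0 ⟨(r:ℕ)+1, by have := r.isLt; omega⟩) 0 ⟨(s:ℕ)+1, by have := s.isLt; omega⟩), ?_⟩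
  set l : ℂ := T (Eb 0 0) 0 0 with hl
  set a : M4 := Matrix.of (fun c j => T (Eb 4 c) 4 j) with ha
  set b : M4 := Matrix.of (fun c j => T (Eb 5 c) 5 j) with hb
  set m : M3 := Matrix.of (fun r s =>
    T (Eb 0 ⟨(r:ℕ)+1, by have := r.isLt; omega⟩) 0 ⟨(s:ℕ)+1, by have := s.isLt; omega⟩) with hm
  have key : ∀ (k : Fin 8) (c : Fin 4), T (Eb k c) = Sop a b l m (Eb k c) := by
    intro k c
    by_cases hk4 : (k:ℕ) < 4
    · -- upper rows
      set p : Fin 4 := ⟨(k:ℕ), hk4⟩ with hp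
      have hkp : emb4 p = k := Fin.ext rfl
      rw [← hkp]
      rcases eq_or_ne c 0 with hc | hc
      · subst hc
        have h1 : T (Eb (emb4 p) 0) = l • Eb (emb4 p) 0 := by
          conv_lhs => rw [← UA_on_Eb p]
          rw [← hcomm, UA_apply, hl]
        rw [h1]
        ext i j
        rw [Sop_on_Eb_row_lt4 a b l m p 0 i j]
        rcases eq_or_ne i (emb4 p) with hi | hi
        · subst hi
          rw [if_pos rfl, diagLM_row0]
          rcases eq_or_ne j 0 with hj | hj
          · subst hj; simp [stdbHF_apply]
          · simp [stdbHF_apply, hj]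
        · rw [if_neg hi]
          simp [stdbHF_apply, hi]
      · -- c ≠ 0
        have h1 : T (Eb (emb4 p) c)
            = Matrix.of (fun i j => if i = emb4 p ∧ j ≠ 0 then T (Eb 0 c) 0 j else 0) := by
          conv_lhs => rw [← UB_on_Eb p c hc]
          rw [← hcomm, UB_apply]
        rw [h1]
        ext i j
        rw [Sop_on_Eb_row_lt4 a b l m p c i j]
        simp only [Matrix.of_apply]
        rcases eq_or_ne i (emb4 p) with hi | hi
        · subst hi
          rw [if_pos rfl, diagLM_row_ne0 l m hc]
          rcases eq_or_ne j 0 with hj | hj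
          · subst hj
            rw [if_neg (show ¬(emb4 p = emb4 p ∧ (0:Fin 4) ≠ 0) from fun h => h.2 rfl),
              if_pos rfl]
          · rw [if_pos ⟨rfl, hj⟩, if_neg hj, hm]
            simp only [Matrix.of_apply]
            have hc1 := fin4_pos_of_ne hc
            have hj1 := fin4_pos_of_ne hj
            have ec : (⟨((⟨(c:ℕ)-1, by have := c.isLt; omega⟩ : Fin 3):ℕ)+1,
                by have := c.isLt; simp; omega⟩ : Fin 4) = c := Fin.ext (by simp; omega)
            have ej : (⟨((⟨(j:ℕ)-1, by have := j.isLt; omega⟩ : Fin 3):ℕ)+1,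
                by have := j.isLt; simp; omega⟩ : Fin 4) = j := Fin.ext (by simp; omega)
            rw [ec, ej]
        · rw [if_neg hi, if_neg (show ¬(i = emb4 p ∧ j ≠ 0) from fun h => hi h.1)]
    · by_cases hk44 : (k:ℕ) = 4
      · -- row 4
        have hk : k = 4 := fin8_val_eq_four hk44
        subst hk
        have h1 : T (Eb 4 c)
            = Matrix.of (fun i j => if i = 4 then T (Eb 4 c) 4 j else 0) := by
          conv_lhs => rw [← UL_on_Eb c]
          rw [← hcomm, UL_apply]
        conv_lhs => rw [h1]
        ext i j
        rw [Sop_on_Eb_row4 a b l m c i j]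
        simp only [Matrix.of_apply]
        rcases eq_or_ne i (4:Fin 8) with hi | hi
        · subst hi
          rw [if_pos rfl, if_pos rfl, ha]
          rfl
        · rw [if_neg hi, if_neg hi]
      · -- rows 5..7
        have hk5 : 5 ≤ (k:ℕ) := by have := k.isLt; omega
        set r : Fin 3 := ⟨(k:ℕ) - 5, by have := k.isLt; omega⟩ with hr
        have hkr : emb5 r = k := Fin.ext (by
          rw [emb5_val]
          have : (r:ℕ) = (k:ℕ) - 5 := rfl
          omega)
        rw [← hkr]
        have h1 : T (Eb (emb5 r) c)
            = Matrix.of (fun i j => if i = emb5 r then T (Eb 5 c) 5 j else 0) := by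
          conv_lhs => rw [← UM_on_Eb r c]
          rw [← hcomm, UM_apply]
        rw [h1]
        ext i j
        rw [Sop_on_Eb_row5 a b l m r c i j]
        simp only [Matrix.of_apply]
        rcases eq_or_ne i (emb5 r) with hi | hi
        · subst hi
          rw [if_pos rfl, if_pos rfl, hb]
          rfl
        · rw [if_neg hi, if_neg hi]
  apply LinearMap.ext
  intro ξ
  have hexp : ∀ (L : Module.End ℂ HF),
      L ξ = ∑ k : Fin 8, ∑ c : Fin 4, ξ k c • L (Eb k c) := by
    intro L
    conv_lhs => rw [Matrix.matrix_eq_sum_single ξ]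
    rw [map_sum]
    refine Finset.sum_congr rfl fun k _ => ?_
    rw [map_sum]
    refine Finset.sum_congr rfl fun c _ => ?_
    rw [show Matrix.single k c (ξ k c) = ξ k c • Eb k c by simp, LinearMap.map_smul]
  rw [hexp T, hexp (Sop a b l m)]
  exact Finset.sum_congr rfl fun k _ => Finset.sum_congr rfl fun c _ => by rw [key k c]

end Aux13f
section Aux13g

lemma lrOp_zero_right (A : M8) : lrOp A 0 = 0 := by
  ext ξ : 1; simp [lrOp_apply]

lemma lrOp_smul_right (A : M8) (c : ℂ) (B : M4) :
    lrOp A (c • B) = c • lrOp A B := by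
  ext ξ : 1; simp [lrOp_apply, Matrix.mul_smul]

lemma diagLM_zero : diagLM 0 0 = (0 : M4) := by
  ext i j
  fin_cases i <;> fin_cases j <;>
    simp [diagLM,
      show ((0:Fin 4):ℕ)=0 from rfl, show ((1:Fin 4):ℕ)=1 from rfl,
      show ((2:Fin 4):ℕ)=2 from rfl, show ((3:Fin 4):ℕ)=3 from rfl]

lemma diagLM_add (l l' : ℂ) (m m' : M3) :
    diagLM (l + l') (m + m') = diagLM l m + diagLM l' m' := by
  ext i j
  fin_cases i <;> fin_cases j <;>
    simp [diagLM, Matrix.add_apply,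
      show ((0:Fin 4):ℕ)=0 from rfl, show ((1:Fin 4):ℕ)=1 from rfl,
      show ((2:Fin 4):ℕ)=2 from rfl, show ((3:Fin 4):ℕ)=3 from rfl]

lemma diagLM_smul (c : ℂ) (l : ℂ) (m : M3) :
    diagLM (c * l) (c • m) = c • diagLM l m := by
  ext i j
  fin_cases i <;> fin_cases j <;>
    simp [diagLM, Matrix.smul_apply, smul_eq_mul,
      show ((0:Fin 4):ℕ)=0 from rfl, show ((1:Fin 4):ℕ)=1 from rfl,
      show ((2:Fin 4):ℕ)=2 from rfl, show ((3:Fin 4):ℕ)=3 from rfl]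

lemma sop_zero : Sop 0 0 0 0 = 0 := by
  simp only [Sop, diagLM_zero, lrOp_zero_right]
  abel

lemma sop_add (a a' b b' : M4) (l l' : ℂ) (m m' : M3) :
    Sop (a + a') (b + b') (l + l') (m + m') = Sop a b l m + Sop a' b' l' m' := by
  simp only [Sop, diagLM_add, lrOp_add_right]
  abel

lemma sop_smul (c : ℂ) (a b : M4) (l : ℂ) (m : M3) :
    Sop (c • a) (c • b) (c * l) (c • m) = c • Sop a b l m := by
  simp only [Sop, diagLM_smul, lrOp_smul_right, smul_add]

/-- The set of operators of the canonical commutant form. -/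
def SopSet : Set (Module.End ℂ HF) := { T | ∃ a b l m, T = Sop a b l m }

/-- The algebra homomorphism M₄ ⊕ M₄ ⊕ ℂ ⊕ M₃ → End(H_F) with image the commutant. -/
def Phi : (M4 × M4 × ℂ × M3) →ₐ[ℂ] Module.End ℂ HF where
  toFun x := Sop x.1ᵀ x.2.1ᵀ x.2.2.1 x.2.2.2ᵀ
  map_one' := by
    simp only [Prod.fst_one, Prod.snd_one, Matrix.transpose_one]
    exact sop_one
  map_mul' x y := by
    simp only [Prod.fst_mul, Prod.snd_mul, Matrix.transpose_mul]
    rw [sop_mul_sop, mul_comm x.2.2.1 y.2.2.1]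
  map_zero' := by
    simp only [Prod.fst_zero, Prod.snd_zero, Matrix.transpose_zero]
    exact sop_zero
  map_add' x y := by
    simp only [Prod.fst_add, Prod.snd_add, Matrix.transpose_add]
    exact sop_add _ _ _ _ _ _ _ _
  commutes' c := by
    have h1 : ((algebraMap ℂ (M4 × M4 × ℂ × M3)) c)
        = (c • 1, c • 1, c * 1, c • 1) := by
      rw [Algebra.algebraMap_eq_smul_one]
      rfl
    rw [h1]
    simp only [Matrix.transpose_smul, Matrix.transpose_one]
    rw [sop_smul, sop_one, Algebra.algebraMap_eq_smul_one]

lemma sop_inj {a b : M4} {l : ℂ} {m : M3} {a' b' : M4} {l' : ℂ} {m' : M3}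
    (h : Sop a b l m = Sop a' b' l' m') : a = a' ∧ b = b' ∧ l = l' ∧ m = m' := by
  have he : ∀ (k : Fin 8) (c : Fin 4) (i : Fin 8) (j : Fin 4),
      Sop a b l m (Eb k c) i j = Sop a' b' l' m' (Eb k c) i j := by
    intro k c i j; rw [h]
  refine ⟨?_, ?_, ?_, ?_⟩
  · ext c j
    have := he 4 c 4 j
    rw [Sop_on_Eb_row4, Sop_on_Eb_row4, if_pos rfl, if_pos rfl] at this
    exact this
  · ext c j
    have := he (emb5 0) c (emb5 0) j
    rw [Sop_on_Eb_row5 a b l m 0, Sop_on_Eb_row5 a' b' l' m' 0,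
      if_pos rfl, if_pos rfl] at this
    exact this
  · have := he (emb4 0) 0 (emb4 0) 0
    rw [Sop_on_Eb_row_lt4 a b l m 0, Sop_on_Eb_row_lt4 a' b' l' m' 0,
      if_pos rfl, if_pos rfl, diagLM_row0, diagLM_row0, if_pos rfl, if_pos rfl] at this
    exact this
  · ext r s
    have hc0 : (⟨(r:ℕ)+1, by have := r.isLt; omega⟩ : Fin 4) ≠ 0 := by
      intro hh
      have := congrArg Fin.val hh
      simp at this
    have hj0 : (⟨(s:ℕ)+1, by have := s.isLt; omega⟩ : Fin 4) ≠ 0 := by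
      intro hh
      have := congrArg Fin.val hh
      simp at this
    have := he (emb4 0) ⟨(r:ℕ)+1, by have := r.isLt; omega⟩ (emb4 0)
      ⟨(s:ℕ)+1, by have := s.isLt; omega⟩
    rw [Sop_on_Eb_row_lt4 a b l m 0, Sop_on_Eb_row_lt4 a' b' l' m' 0,
      if_pos rfl, if_pos rfl,
      diagLM_row_ne0 l m hc0, diagLM_row_ne0 l' m' hc0, if_neg hj0, if_neg hj0] at this
    have er : (⟨((⟨(r:ℕ)+1, by have := r.isLt; omega⟩ : Fin 4) : ℕ) - 1,
        by omega⟩ : Fin 3) = r := Fin.ext (by simp)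
    have es : (⟨((⟨(s:ℕ)+1, by have := s.isLt; omega⟩ : Fin 4) : ℕ) - 1,
        by omega⟩ : Fin 3) = s := Fin.ext (by simp)
    rw [er, es] at this
    exact this

lemma phi_inj : Function.Injective Phi := by
  intro x y h
  have h' : Sop x.1ᵀ x.2.1ᵀ x.2.2.1 x.2.2.2ᵀ = Sop y.1ᵀ y.2.1ᵀ y.2.2.1 y.2.2.2ᵀ := h
  obtain ⟨h1, h2, h3, h4⟩ := sop_inj h'
  have e1 : x.1 = y.1 := by
    have := congrArg Matrix.transpose h1
    simpa using this
  have e2 : x.2.1 = y.2.1 := by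
    have := congrArg Matrix.transpose h2
    simpa using this
  have e4 : x.2.2.2 = y.2.2.2 := by
    have := congrArg Matrix.transpose h4
    simpa using this
  exact Prod.ext e1 (Prod.ext e2 (Prod.ext h3 e4))

lemma phi_range : Set.range Phi = SopSet := by
  ext T
  constructor
  · rintro ⟨⟨a, b, l, m⟩, rfl⟩
    exact ⟨aᵀ, bᵀ, l, mᵀ, rfl⟩
  · rintro ⟨a, b, l, m, rfl⟩
    refine ⟨(aᵀ, bᵀ, l, mᵀ), ?_⟩
    show Sop aᵀᵀ bᵀᵀ l mᵀᵀ = Sop a b l m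
    rw [Matrix.transpose_transpose, Matrix.transpose_transpose, Matrix.transpose_transpose]

lemma image_eq_SopSet : conjByJ '' BSet = SopSet := by
  ext T
  constructor
  · rintro ⟨U, ⟨a, b, l, m, rfl⟩, rfl⟩
    exact ⟨aᴴ, bᴴ, conj l, mᴴ, conjByJ_bop a b l m⟩
  · rintro ⟨a, b, l, m, rfl⟩
    refine ⟨Bop aᴴ bᴴ (conj l) mᴴ, ⟨aᴴ, bᴴ, conj l, mᴴ, rfl⟩, ?_⟩
    rw [conjByJ_bop]
    simp

lemma SopSet_eq_centralizer :
    SopSet = (Subalgebra.centralizer ℂ BSet : Set (Module.End ℂ HF)) := by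
  ext T
  constructor
  · rintro ⟨a, b, l, m, rfl⟩
    rw [SetLike.mem_coe, Subalgebra.mem_centralizer_iff]
    rintro U ⟨a', b', l', m', rfl⟩
    exact bop_sop_commute a' b' l' m' a b l m
  · intro hmem
    rw [SetLike.mem_coe, Subalgebra.mem_centralizer_iff] at hmem
    exact exists_sop_of_centralizer T hmem

end Aux13g

/-- J_F B J_F is the commutant of B. -/
theorem stmt_13 :
    (∀ T ∈ BSet, ∀ S ∈ conjByJ '' BSet, Commute T S) ∧
    conjByJ '' BSet = (Subalgebra.centralizer ℂ BSet : Set (Module.End ℂ HF)) ∧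
    Nonempty ((Subalgebra.centralizer ℂ BSet) ≃ₐ[ℂ] (M4 × M4 × ℂ × M3)) := by
  have h2 : conjByJ '' BSet = (Subalgebra.centralizer ℂ BSet : Set (Module.End ℂ HF)) :=
    image_eq_SopSet.trans SopSet_eq_centralizer
  refine ⟨?_, h2, ?_⟩
  · intro T hT S hS
    rw [h2, SetLike.mem_coe, Subalgebra.mem_centralizer_iff] at hS
    exact hS T hT
  · have hr : Phi.range = Subalgebra.centralizer ℂ BSet := by
      apply SetLike.ext'
      rw [AlgHom.coe_range, phi_range, SopSet_eq_centralizer]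
    exact ⟨(Subalgebra.equivOfEq _ _ hr.symm).trans (AlgEquiv.ofInjective Phi phi_inj).symm⟩

end
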